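/- Let A and B be real m×n matrices. If A·B' = 0 and A'·B = 0, then ‖A + B‖_* = ‖A‖_* + ‖B‖_*. -/

import Mathlib

open Matrix

/-- The nuclear norm (sum of singular values) of a real matrix, as the trace of √(XᵀX). -/
noncomputable def nucNorm {m n : Type*} [Fintype m] [Fintype n] [DecidableEq n]
    (X : Matrix m n ℝ) : ℝ :=
  let hA := (Matrix.posSemidef_conjTranspose_mul_self X).1
  ((hA.eigenvectorUnitary : Matrix n n ℝ) * diagonal (fun i => Real.sqrt (hA.eigenvalues i)) *
    (star hA.eigenvectorUnitary : Matrix n n ℝ)).trace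

open scoped MatrixOrder in
lemma nucNorm_eq_trace_sqrt {m n : Type*} [Fintype m] [Fintype n] [DecidableEq n]
    (X : Matrix m n ℝ) : nucNorm X = (CFC.sqrt (Xᴴ * X)).trace := by
  have hA := Matrix.posSemidef_conjTranspose_mul_self X
  unfold nucNorm
  rw [CFC.sqrt_eq_cfc, cfc_nnreal_eq_real _ _ hA.nonneg, hA.1.cfc_eq]
  simp only [IsHermitian.cfc, Unitary.conjStarAlgAut_apply, Real.coe_sqrt, Real.coe_toNNReal']
  have hmax : ∀ i, max (hA.1.eigenvalues i) 0 = hA.1.eigenvalues i :=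
    fun i => max_eq_left (hA.eigenvalues_nonneg i)
  simp only [Function.comp_def, hmax]
  rfl

lemma eq_zero_of_trace_conjTranspose_mul_self {k l : Type*} [Fintype k] [Fintype l]
    {C : Matrix k l ℝ} (h : Matrix.trace (Cᴴ * C) = 0) : C = 0 := by
  have h' : ∑ j, ∑ i, C i j * C i j = 0 := by
    simpa [Matrix.trace, Matrix.mul_apply, Matrix.conjTranspose_apply, Matrix.diag] using h
  ext i j
  have hj := (Finset.sum_eq_zero_iff_of_nonneg (fun j _ =>
    Finset.sum_nonneg fun i _ => mul_self_nonneg (C i j))).mp h' j (Finset.mem_univ j)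
  have hi := (Finset.sum_eq_zero_iff_of_nonneg (fun i _ =>
    mul_self_nonneg (C i j))).mp hj i (Finset.mem_univ i)
  simpa using mul_self_eq_zero.mp hi

open scoped MatrixOrder in
/-- If ABᵀ = 0 and AᵀB = 0 then the nuclear norm is additive: ‖A + B‖₊ = ‖A‖₊ + ‖B‖₊. -/
theorem nucNorm_add_of_orthogonal (m n : ℕ) (A B : Matrix (Fin m) (Fin n) ℝ)
    (h₁ : A * Bᵀ = 0) (h₂ : Aᵀ * B = 0) :
    nucNorm (A + B) = nucNorm A + nucNorm B := by
  have hM := Matrix.posSemidef_conjTranspose_mul_self A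
  have hN := Matrix.posSemidef_conjTranspose_mul_self B
  set P := CFC.sqrt (Aᴴ * A) with hPdef
  set Q := CFC.sqrt (Bᴴ * B) with hQdef
  have hABH : Aᴴ * B = 0 := by simpa using h₂
  have hBHA : Bᴴ * A = 0 := by
    have := congrArg Matrix.conjTranspose hABH
    simpa [Matrix.conjTranspose_mul] using this
  have hABT : A * Bᴴ = 0 := by simpa using h₁
  have hBAT : B * Aᴴ = 0 := by
    have := congrArg Matrix.conjTranspose hABT
    simpa [Matrix.conjTranspose_mul] using this
  have hP2 : P * P = Aᴴ * A := CFC.sqrt_mul_sqrt_self _ hM.nonneg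
  have hQ2 : Q * Q = Bᴴ * B := CFC.sqrt_mul_sqrt_self _ hN.nonneg
  have hPH : Pᴴ = P := (CFC.sqrt_nonneg (Aᴴ * A)).posSemidef.1
  have hQH : Qᴴ = Q := (CFC.sqrt_nonneg (Bᴴ * B)).posSemidef.1
  have hNM : (Bᴴ * B) * (Aᴴ * A) = 0 := by
    rw [Matrix.mul_assoc, ← Matrix.mul_assoc B, hBAT, Matrix.zero_mul, Matrix.mul_zero]
  have hPQ : P * Q = 0 := by
    apply eq_zero_of_trace_conjTranspose_mul_self
    have he : (P * Q)ᴴ * (P * Q) = Q * (P * P) * Q := by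
      rw [Matrix.conjTranspose_mul, hPH, hQH]; simp [Matrix.mul_assoc]
    rw [he]
    rw [Matrix.trace_mul_comm, ← Matrix.mul_assoc, hQ2, hP2, hNM, Matrix.trace_zero]
  have hQP : Q * P = 0 := by
    rw [← hPH, ← hQH, ← Matrix.conjTranspose_mul, hPQ, Matrix.conjTranspose_zero]
  have hS : Matrix.PosSemidef (P + Q) :=
    (CFC.sqrt_nonneg (Aᴴ * A)).posSemidef.add (CFC.sqrt_nonneg (Bᴴ * B)).posSemidef
  have hSq : (P + Q) ^ 2 = (A + B)ᴴ * (A + B) := by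
    rw [pow_two, Matrix.add_mul, Matrix.mul_add, Matrix.mul_add, hPQ, hQP, hP2, hQ2]
    rw [Matrix.conjTranspose_add, Matrix.add_mul, Matrix.mul_add, Matrix.mul_add,
      hABH, hBHA]
  have key : P + Q = CFC.sqrt ((A + B)ᴴ * (A + B)) :=
    (CFC.sqrt_unique (by rw [← pow_two]; exact hSq) hS.nonneg).symm
  rw [nucNorm_eq_trace_sqrt, nucNorm_eq_trace_sqrt, nucNorm_eq_trace_sqrt]
  rw [← key, Matrix.trace_add]
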